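/- Fix ω ∈ ℂ, a sequence of positive reals (r_n)_{n≥1} and a sequence of reals (d_n)_{n≥0}. Define (P_n)_{n≥0} and (Q_n)_{n≥0} by P₀ = 1, P₁ = (ω − d₀)/√r₁, Q₀ = 0, Q₁ = 1/√r₁, and for n ≥ 1: ω·P_n = √r_n·P_{n−1} + d_n·P_n + √r_{n+1}·P_{n+1}, and the same recurrence for Q. If X := ∑_{n=0}^∞ |P_n|² < ∞ and Y := ∑_{n=0}^∞ |Q_n|² < ∞, then ∑_{k=1}^∞ 1/√r_k ≤ 2·√(X·Y); in particular ∑_{k=1}^∞ 1/√r_k converges. -/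

import Mathlib

private lemma cs_tsum {f g : ℕ → ℝ} (hf : ∀ n, 0 ≤ f n) (hg : ∀ n, 0 ≤ g n)
    (hf2 : Summable fun n => f n ^ 2) (hg2 : Summable fun n => g n ^ 2) :
    Summable (fun n => f n * g n) ∧
      ∑' n, f n * g n ≤ Real.sqrt ((∑' n, f n ^ 2) * (∑' n, g n ^ 2)) := by
  have hsum : Summable (fun n => f n * g n) := by
    refine Summable.of_nonneg_of_le (fun n => mul_nonneg (hf n) (hg n))
      (fun n => ?_) ((hf2.add hg2).div_const 2)
    have := two_mul_le_add_sq (f n) (g n)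
    show f n * g n ≤ (f n ^ 2 + g n ^ 2) / 2
    linarith
  refine ⟨hsum, Summable.tsum_le_of_sum_le hsum fun s => ?_⟩
  calc ∑ i ∈ s, f i * g i
      ≤ Real.sqrt (∑ i ∈ s, f i ^ 2) * Real.sqrt (∑ i ∈ s, g i ^ 2) :=
        Real.sum_mul_le_sqrt_mul_sqrt s f g
    _ ≤ Real.sqrt (∑' n, f n ^ 2) * Real.sqrt (∑' n, g n ^ 2) :=
        mul_le_mul (Real.sqrt_le_sqrt (Summable.sum_le_tsum s (fun n _ => sq_nonneg _) hf2))
          (Real.sqrt_le_sqrt (Summable.sum_le_tsum s (fun n _ => sq_nonneg _) hg2))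
          (Real.sqrt_nonneg _) (Real.sqrt_nonneg _)
    _ = Real.sqrt ((∑' n, f n ^ 2) * (∑' n, g n ^ 2)) :=
        (Real.sqrt_mul (tsum_nonneg fun n => sq_nonneg _) _).symm

set_option maxHeartbeats 1000000 in
/-- **Cauchy–Schwarz estimate.** Fix `ω ∈ ℂ`, positive reals `(r_n)_{n≥1}`
and reals `(d_n)_{n≥0}`.  Define `(P_n)` and `(Q_n)` by `P₀ = 1`, `P₁ = (ω − d₀)/√r₁`,
`Q₀ = 0`, `Q₁ = 1/√r₁`, and for `n ≥ 1` the three-term recurrence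
`ω·X_n = √r_n·X_{n−1} + d_n·X_n + √r_{n+1}·X_{n+1}` for `X = P, Q`.
If `X = ∑|P_n|² < ∞` and `Y = ∑|Q_n|² < ∞`, then
`∑_{k=1}^∞ 1/√r_k ≤ 2√(X·Y)`; in particular `∑_{k=1}^∞ 1/√r_k` converges. -/
theorem stmt_16 (ω : ℂ) (r : ℕ → ℝ) (d : ℕ → ℝ)
    (hr : ∀ n : ℕ, 1 ≤ n → 0 < r n)
    (P Q : ℕ → ℂ)
    (hP0 : P 0 = 1) (hP1 : P 1 = (ω - (d 0 : ℂ)) / (Real.sqrt (r 1) : ℂ))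
    (hQ0 : Q 0 = 0) (hQ1 : Q 1 = 1 / (Real.sqrt (r 1) : ℂ))
    (hPrec : ∀ n : ℕ, 1 ≤ n →
      ω * P n = (Real.sqrt (r n) : ℂ) * P (n - 1) + (d n : ℂ) * P n
        + (Real.sqrt (r (n + 1)) : ℂ) * P (n + 1))
    (hQrec : ∀ n : ℕ, 1 ≤ n →
      ω * Q n = (Real.sqrt (r n) : ℂ) * Q (n - 1) + (d n : ℂ) * Q n
        + (Real.sqrt (r (n + 1)) : ℂ) * Q (n + 1))
    (hPsq : Summable fun n : ℕ => ‖P n‖ ^ 2)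
    (hQsq : Summable fun n : ℕ => ‖Q n‖ ^ 2) :
    (Summable fun k : ℕ => 1 / Real.sqrt (r (k + 1))) ∧
    ∑' k : ℕ, 1 / Real.sqrt (r (k + 1))
      ≤ 2 * Real.sqrt ((∑' n : ℕ, ‖P n‖ ^ 2)
          * (∑' n : ℕ, ‖Q n‖ ^ 2)) := by
  have hrpos : ∀ k : ℕ, 0 < Real.sqrt (r (k + 1)) :=
    fun k => Real.sqrt_pos.mpr (hr (k + 1) (Nat.le_add_left 1 k))
  -- Wronskian identity
  have W : ∀ k : ℕ, (Real.sqrt (r (k + 1)) : ℂ) * (P k * Q (k + 1) - P (k + 1) * Q k) = 1 := by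
    intro k
    induction k with
    | zero =>
        rw [hP0, hQ0, hQ1]
        have h0 : (Real.sqrt (r 1) : ℂ) ≠ 0 := by
          exact_mod_cast (hrpos 0).ne'
        field_simp
        simp
    | succ k ih =>
        have eP := hPrec (k + 1) (Nat.le_add_left 1 k)
        have eQ := hQrec (k + 1) (Nat.le_add_left 1 k)
        simp only [Nat.add_sub_cancel] at eP eQ
        linear_combination ih + Q (k + 1) * eP - P (k + 1) * eQ
  -- pointwise bound
  set a : ℕ → ℝ := fun n => ‖P n‖ with ha
  set b : ℕ → ℝ := fun n => ‖Q n‖ with hb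
  have key : ∀ k : ℕ, 1 / Real.sqrt (r (k + 1)) ≤ a k * b (k + 1) + a (k + 1) * b k := by
    intro k
    have h1 : Real.sqrt (r (k + 1)) * ‖P k * Q (k + 1) - P (k + 1) * Q k‖ = 1 := by
      have := congrArg norm (W k)
      simpa [norm_mul, Complex.norm_real, Real.norm_eq_abs, abs_of_nonneg (hrpos k).le] using this
    have h2 : ‖P k * Q (k + 1) - P (k + 1) * Q k‖ = 1 / Real.sqrt (r (k + 1)) := by
      rw [eq_div_iff (hrpos k).ne']
      linarith [h1]
    rw [← h2]
    calc ‖P k * Q (k + 1) - P (k + 1) * Q k‖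
        ≤ ‖P k * Q (k + 1)‖ + ‖P (k + 1) * Q k‖ := by
          simpa [sub_eq_add_neg] using norm_add_le (P k * Q (k + 1)) (-(P (k + 1) * Q k))
      _ = a k * b (k + 1) + a (k + 1) * b k := by simp [ha, hb, norm_mul]
  have ha2 : Summable fun n => a n ^ 2 := hPsq
  have hb2 : Summable fun n => b n ^ 2 := hQsq
  have ha2' : Summable fun n => a (n + 1) ^ 2 := (summable_nat_add_iff 1).mpr hPsq
  have hb2' : Summable fun n => b (n + 1) ^ 2 := (summable_nat_add_iff 1).mpr hQsq
  have han : ∀ n, 0 ≤ a n := fun n => norm_nonneg _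
  have hbn : ∀ n, 0 ≤ b n := fun n => norm_nonneg _
  obtain ⟨S1, B1⟩ := cs_tsum han (fun n => hbn (n + 1)) ha2 hb2'
  obtain ⟨S2, B2⟩ := cs_tsum (fun n => han (n + 1)) hbn ha2' hb2
  have hstot : Summable fun k => a k * b (k + 1) + a (k + 1) * b k := S1.add S2
  have hsummable : Summable fun k : ℕ => 1 / Real.sqrt (r (k + 1)) :=
    Summable.of_nonneg_of_le (fun k => by positivity) key hstot
  refine ⟨hsummable, ?_⟩
  -- tail tsums are at most full tsums
  have htailb : ∑' n, b (n + 1) ^ 2 ≤ ∑' n, b n ^ 2 := by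
    have := (Summable.sum_add_tsum_nat_add (f := fun n => b n ^ 2) 1 hb2).symm
    have hhead : (0:ℝ) ≤ ∑ i ∈ Finset.range 1, b i ^ 2 :=
      Finset.sum_nonneg fun i _ => sq_nonneg _
    linarith
  have htaila : ∑' n, a (n + 1) ^ 2 ≤ ∑' n, a n ^ 2 := by
    have := (Summable.sum_add_tsum_nat_add (f := fun n => a n ^ 2) 1 ha2).symm
    have hhead : (0:ℝ) ≤ ∑ i ∈ Finset.range 1, a i ^ 2 :=
      Finset.sum_nonneg fun i _ => sq_nonneg _
    linarith
  have hXnn : (0:ℝ) ≤ ∑' n, a n ^ 2 := tsum_nonneg fun n => sq_nonneg _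
  have hYnn : (0:ℝ) ≤ ∑' n, b n ^ 2 := tsum_nonneg fun n => sq_nonneg _
  calc ∑' k : ℕ, 1 / Real.sqrt (r (k + 1))
      ≤ ∑' k, (a k * b (k + 1) + a (k + 1) * b k) := Summable.tsum_le_tsum key hsummable hstot
    _ = (∑' k, a k * b (k + 1)) + ∑' k, a (k + 1) * b k := Summable.tsum_add S1 S2
    _ ≤ Real.sqrt ((∑' n, a n ^ 2) * (∑' n, b (n + 1) ^ 2))
        + Real.sqrt ((∑' n, a (n + 1) ^ 2) * (∑' n, b n ^ 2)) := add_le_add B1 B2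
    _ ≤ Real.sqrt ((∑' n, a n ^ 2) * (∑' n, b n ^ 2))
        + Real.sqrt ((∑' n, a n ^ 2) * (∑' n, b n ^ 2)) := by
        have g1 : (∑' n, a n ^ 2) * (∑' n, b (n + 1) ^ 2)
            ≤ (∑' n, a n ^ 2) * (∑' n, b n ^ 2) := mul_le_mul_of_nonneg_left htailb hXnn
        have g2 : (∑' n, a (n + 1) ^ 2) * (∑' n, b n ^ 2)
            ≤ (∑' n, a n ^ 2) * (∑' n, b n ^ 2) := mul_le_mul_of_nonneg_right htaila hYnn
        exact add_le_add (Real.sqrt_le_sqrt g1) (Real.sqrt_le_sqrt g2)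
    _ = 2 * Real.sqrt ((∑' n, a n ^ 2) * (∑' n, b n ^ 2)) := by ring
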